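/- Counterexample to well-posedness via SI without QI: let Δ = I₃ (3×3 identity pattern), S the binary pattern with ones at positions (1,1),(2,1),(2,2),(3,3), and Ŝ the pattern with ones at (1,1),(2,1),(2,2),(3,2),(3,3). Then Ŝ is not quadratically invariant with respect to patterns in Sparse(Δ) (i.e., there exist K ∈ Sparse(Ŝ) and G ∈ Sparse(Δ) with KGK ∉ Sparse(Ŝ)), and the matrices V, V̂ produced by Algorithm 1 from S and Ŝ satisfy V ≰ V̂ entrywise. -/

import Mathlib

open Matrix
open scoped Classical

/-- Algorithm 1 output: `V j k = 0` iff there is a row `i` with `S i j = 1` and `S i k = 0`,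
else `V j k = 1`. -/
noncomputable def algV (S : Matrix (Fin 3) (Fin 3) ℝ) : Matrix (Fin 3) (Fin 3) ℝ :=
  Matrix.of fun j k => if ∃ i, S i j = 1 ∧ S i k = 0 then 0 else 1

/-- counterexample to well-posedness via SI without QI: with
`Δ = I₃`, `S = [[1,0,0],[1,1,0],[0,0,1]]` and `Ŝ = [[1,0,0],[1,1,0],[0,1,1]]`:
(1) `Ŝ` is not QI w.r.t. patterns in `Sparse(Δ)`: there are `K ∈ Sparse(Ŝ)` and
`G ∈ Sparse(Δ)` with `KGK ∉ Sparse(Ŝ)`; and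
(2) the Algorithm-1 patterns satisfy `V ≰ V̂`: `V` has a `1` where `V̂` has a `0`. -/
theorem si_without_qi_counterexample :
    (∃ K G : Matrix (Fin 3) (Fin 3) ℝ,
      (∀ i j, (!![1,0,0;1,1,0;0,1,1] : Matrix (Fin 3) (Fin 3) ℝ) i j = 0 → K i j = 0) ∧
      (∀ i j, (1 : Matrix (Fin 3) (Fin 3) ℝ) i j = 0 → G i j = 0) ∧
      ¬ (∀ i j, (!![1,0,0;1,1,0;0,1,1] : Matrix (Fin 3) (Fin 3) ℝ) i j = 0 →
          (K * G * K : Matrix (Fin 3) (Fin 3) ℝ) i j = 0)) ∧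
    (∃ j k, algV (!![1,0,0;1,1,0;0,0,1] : Matrix (Fin 3) (Fin 3) ℝ) j k = 1 ∧
      algV (!![1,0,0;1,1,0;0,1,1] : Matrix (Fin 3) (Fin 3) ℝ) j k = 0) := by
  constructor
  · refine ⟨!![1,0,0;1,1,0;0,1,1], 1, fun i j h => h, fun i j h => h, fun h => ?_⟩
    have h2 := h 2 0 (by simp)
    rw [Matrix.mul_one, Matrix.mul_apply, Fin.sum_univ_three] at h2
    simp at h2
  · refine ⟨1, 0, ?_, ?_⟩
    · show (if _ then _ else _) = _
      rw [if_neg]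
      rintro ⟨i, h1, h0⟩
      fin_cases i <;> simp_all [Matrix.vecHead, Matrix.vecTail]
    · show (if _ then _ else _) = _
      rw [if_pos ⟨2, by simp [Matrix.vecHead, Matrix.vecTail], by simp [Matrix.vecHead, Matrix.vecTail]⟩]
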